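/- The group Ũ₃(ℂ) is the disjoint union of the twelve sets C₁, …, C₁₂ defined as follows (all matrices are of the form [[α,b,c],[0,δ,e],[0,0,1]]): C₁ = {identity}; C₂ = {diag entries (1,1,1), b ≠ 0, e ≠ 0}; C₃ = {diag (1,1,1), b ≠ 0, e = 0}; C₄ = {diag (1,1,1), b = 0, e ≠ 0}; C₅ = {diag (1,1,1), b = e = 0, c ≠ 0}; C₆ = {diag (1,t,1) with t ≠ 0,1 and c(t−1) = be}; C₇ = {diag (1,t,1) with t ≠ 0,1 and c(t−1) ≠ be}; C₈ = {diag (t,1,1) with t ≠ 0,1 and e = 0}; C₉ = {diag (t,1,1) with t ≠ 0,1 and e ≠ 0}; C₁₀ = {diag (t,t,1) with t ≠ 0,1 and b = 0}; C₁₁ = {diag (t,t,1) with t ≠ 0,1 and b ≠ 0}; C₁₂ = {diag (t,s,1) with t,s ≠ 0,1 and t ≠ s}. Moreover, each Cᵢ is invariant under conjugation by elements of Ũ₃(ℂ). -/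

import Mathlib

open Matrix

/-- `3 × 3` matrices over `F`. -/
abbrev M3 (F : Type*) := Matrix (Fin 3) (Fin 3) F

/-- Membership in the group `Ũ₃(F)` of upper triangular `3 × 3` matrices
`[[a,b,c],[0,d,e],[0,0,1]]` with `a, d ≠ 0` and `(3,3)`-entry equal to `1`. -/
def inU3 {F : Type*} [Field F] (A : M3 F) : Prop :=
  A 0 0 ≠ 0 ∧ A 1 1 ≠ 0 ∧ A 2 2 = 1 ∧ A 1 0 = 0 ∧ A 2 0 = 0 ∧ A 2 1 = 0

def C1 : Set (M3 ℂ) := {A | A = !![1, 0, 0; 0, 1, 0; 0, 0, 1]}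

def C2 : Set (M3 ℂ) :=
  {A | ∃ b c e : ℂ, b ≠ 0 ∧ e ≠ 0 ∧ A = !![1, b, c; 0, 1, e; 0, 0, 1]}

def C3 : Set (M3 ℂ) :=
  {A | ∃ b c : ℂ, b ≠ 0 ∧ A = !![1, b, c; 0, 1, 0; 0, 0, 1]}

def C4 : Set (M3 ℂ) :=
  {A | ∃ c e : ℂ, e ≠ 0 ∧ A = !![1, 0, c; 0, 1, e; 0, 0, 1]}

def C5 : Set (M3 ℂ) :=
  {A | ∃ c : ℂ, c ≠ 0 ∧ A = !![1, 0, c; 0, 1, 0; 0, 0, 1]}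

def C6 : Set (M3 ℂ) :=
  {A | ∃ t b c e : ℂ, t ≠ 0 ∧ t ≠ 1 ∧ c * (t - 1) = b * e ∧ A = !![1, b, c; 0, t, e; 0, 0, 1]}

def C7 : Set (M3 ℂ) :=
  {A | ∃ t b c e : ℂ, t ≠ 0 ∧ t ≠ 1 ∧ c * (t - 1) ≠ b * e ∧ A = !![1, b, c; 0, t, e; 0, 0, 1]}

def C8 : Set (M3 ℂ) :=
  {A | ∃ t b c : ℂ, t ≠ 0 ∧ t ≠ 1 ∧ A = !![t, b, c; 0, 1, 0; 0, 0, 1]}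

def C9 : Set (M3 ℂ) :=
  {A | ∃ t b c e : ℂ, t ≠ 0 ∧ t ≠ 1 ∧ e ≠ 0 ∧ A = !![t, b, c; 0, 1, e; 0, 0, 1]}

def C10 : Set (M3 ℂ) :=
  {A | ∃ t c e : ℂ, t ≠ 0 ∧ t ≠ 1 ∧ A = !![t, 0, c; 0, t, e; 0, 0, 1]}

def C11 : Set (M3 ℂ) :=
  {A | ∃ t b c e : ℂ, t ≠ 0 ∧ t ≠ 1 ∧ b ≠ 0 ∧ A = !![t, b, c; 0, t, e; 0, 0, 1]}

def C12 : Set (M3 ℂ) :=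
  {A | ∃ t s b c e : ℂ, t ≠ 0 ∧ t ≠ 1 ∧ s ≠ 0 ∧ s ≠ 1 ∧ t ≠ s ∧
    A = !![t, b, c; 0, s, e; 0, 0, 1]}

section Aux

lemma mem_C1_iff (A : M3 ℂ) : A ∈ C1 ↔
    (A 1 0 = 0 ∧ A 2 0 = 0 ∧ A 2 1 = 0 ∧ A 2 2 = 1) ∧
    A 0 0 = 1 ∧ A 1 1 = 1 ∧ A 0 1 = 0 ∧ A 1 2 = 0 ∧ A 0 2 = 0 := by
  constructor
  · rintro rfl; norm_num [Matrix.vecHead, Matrix.vecTail, Matrix.cons_val_two, C1]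
  · rintro ⟨⟨h10, h20, h21, h22⟩, h00, h11, h01, h12, h02⟩
    show A = _
    rw [Matrix.eta_fin_three A, h10, h20, h21, h22, h00, h11, h01, h12, h02]
    try simp

lemma mem_C2_iff (A : M3 ℂ) : A ∈ C2 ↔
    (A 1 0 = 0 ∧ A 2 0 = 0 ∧ A 2 1 = 0 ∧ A 2 2 = 1) ∧
    A 0 0 = 1 ∧ A 1 1 = 1 ∧ A 0 1 ≠ 0 ∧ A 1 2 ≠ 0 := by
  constructor
  · rintro ⟨b, c, e, hb, he, rfl⟩; norm_num [Matrix.vecHead, Matrix.vecTail, Matrix.cons_val_two, hb, he]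
  · rintro ⟨⟨h10, h20, h21, h22⟩, h00, h11, h01, h12⟩
    refine ⟨A 0 1, A 0 2, A 1 2, h01, h12, ?_⟩
    rw [Matrix.eta_fin_three A, h10, h20, h21, h22, h00, h11]
    try simp

lemma mem_C3_iff (A : M3 ℂ) : A ∈ C3 ↔
    (A 1 0 = 0 ∧ A 2 0 = 0 ∧ A 2 1 = 0 ∧ A 2 2 = 1) ∧
    A 0 0 = 1 ∧ A 1 1 = 1 ∧ A 0 1 ≠ 0 ∧ A 1 2 = 0 := by
  constructor
  · rintro ⟨b, c, hb, rfl⟩; norm_num [Matrix.vecHead, Matrix.vecTail, Matrix.cons_val_two, hb]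
  · rintro ⟨⟨h10, h20, h21, h22⟩, h00, h11, h01, h12⟩
    refine ⟨A 0 1, A 0 2, h01, ?_⟩
    rw [Matrix.eta_fin_three A, h10, h20, h21, h22, h00, h11, h12]
    try simp

lemma mem_C4_iff (A : M3 ℂ) : A ∈ C4 ↔
    (A 1 0 = 0 ∧ A 2 0 = 0 ∧ A 2 1 = 0 ∧ A 2 2 = 1) ∧
    A 0 0 = 1 ∧ A 1 1 = 1 ∧ A 0 1 = 0 ∧ A 1 2 ≠ 0 := by
  constructor
  · rintro ⟨c, e, he, rfl⟩; norm_num [Matrix.vecHead, Matrix.vecTail, Matrix.cons_val_two, he]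
  · rintro ⟨⟨h10, h20, h21, h22⟩, h00, h11, h01, h12⟩
    refine ⟨A 0 2, A 1 2, h12, ?_⟩
    rw [Matrix.eta_fin_three A, h10, h20, h21, h22, h00, h11, h01]
    try simp

lemma mem_C5_iff (A : M3 ℂ) : A ∈ C5 ↔
    (A 1 0 = 0 ∧ A 2 0 = 0 ∧ A 2 1 = 0 ∧ A 2 2 = 1) ∧
    A 0 0 = 1 ∧ A 1 1 = 1 ∧ A 0 1 = 0 ∧ A 1 2 = 0 ∧ A 0 2 ≠ 0 := by
  constructor
  · rintro ⟨c, hc, rfl⟩; norm_num [Matrix.vecHead, Matrix.vecTail, Matrix.cons_val_two, hc]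
  · rintro ⟨⟨h10, h20, h21, h22⟩, h00, h11, h01, h12, h02⟩
    refine ⟨A 0 2, h02, ?_⟩
    rw [Matrix.eta_fin_three A, h10, h20, h21, h22, h00, h11, h01, h12]
    try simp

lemma mem_C6_iff (A : M3 ℂ) : A ∈ C6 ↔
    (A 1 0 = 0 ∧ A 2 0 = 0 ∧ A 2 1 = 0 ∧ A 2 2 = 1) ∧
    A 0 0 = 1 ∧ A 1 1 ≠ 0 ∧ A 1 1 ≠ 1 ∧ A 0 2 * (A 1 1 - 1) = A 0 1 * A 1 2 := by
  constructor
  · rintro ⟨t, b, c, e, ht0, ht1, hc, rfl⟩; norm_num [Matrix.vecHead, Matrix.vecTail, Matrix.cons_val_two, ht0, ht1, hc]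
  · rintro ⟨⟨h10, h20, h21, h22⟩, h00, ht0, ht1, hc⟩
    refine ⟨A 1 1, A 0 1, A 0 2, A 1 2, ht0, ht1, hc, ?_⟩
    rw [Matrix.eta_fin_three A, h10, h20, h21, h22, h00]
    try simp

lemma mem_C7_iff (A : M3 ℂ) : A ∈ C7 ↔
    (A 1 0 = 0 ∧ A 2 0 = 0 ∧ A 2 1 = 0 ∧ A 2 2 = 1) ∧
    A 0 0 = 1 ∧ A 1 1 ≠ 0 ∧ A 1 1 ≠ 1 ∧ A 0 2 * (A 1 1 - 1) ≠ A 0 1 * A 1 2 := by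
  constructor
  · rintro ⟨t, b, c, e, ht0, ht1, hc, rfl⟩; norm_num [Matrix.vecHead, Matrix.vecTail, Matrix.cons_val_two, ht0, ht1, hc]
  · rintro ⟨⟨h10, h20, h21, h22⟩, h00, ht0, ht1, hc⟩
    refine ⟨A 1 1, A 0 1, A 0 2, A 1 2, ht0, ht1, hc, ?_⟩
    rw [Matrix.eta_fin_three A, h10, h20, h21, h22, h00]
    try simp

lemma mem_C8_iff (A : M3 ℂ) : A ∈ C8 ↔
    (A 1 0 = 0 ∧ A 2 0 = 0 ∧ A 2 1 = 0 ∧ A 2 2 = 1) ∧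
    A 0 0 ≠ 0 ∧ A 0 0 ≠ 1 ∧ A 1 1 = 1 ∧ A 1 2 = 0 := by
  constructor
  · rintro ⟨t, b, c, ht0, ht1, rfl⟩; norm_num [Matrix.vecHead, Matrix.vecTail, Matrix.cons_val_two, ht0, ht1]
  · rintro ⟨⟨h10, h20, h21, h22⟩, ht0, ht1, h11, h12⟩
    refine ⟨A 0 0, A 0 1, A 0 2, ht0, ht1, ?_⟩
    rw [Matrix.eta_fin_three A, h10, h20, h21, h22, h11, h12]
    try simp

lemma mem_C9_iff (A : M3 ℂ) : A ∈ C9 ↔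
    (A 1 0 = 0 ∧ A 2 0 = 0 ∧ A 2 1 = 0 ∧ A 2 2 = 1) ∧
    A 0 0 ≠ 0 ∧ A 0 0 ≠ 1 ∧ A 1 1 = 1 ∧ A 1 2 ≠ 0 := by
  constructor
  · rintro ⟨t, b, c, e, ht0, ht1, he, rfl⟩; norm_num [Matrix.vecHead, Matrix.vecTail, Matrix.cons_val_two, ht0, ht1, he]
  · rintro ⟨⟨h10, h20, h21, h22⟩, ht0, ht1, h11, h12⟩
    refine ⟨A 0 0, A 0 1, A 0 2, A 1 2, ht0, ht1, h12, ?_⟩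
    rw [Matrix.eta_fin_three A, h10, h20, h21, h22, h11]
    try simp

lemma mem_C10_iff (A : M3 ℂ) : A ∈ C10 ↔
    (A 1 0 = 0 ∧ A 2 0 = 0 ∧ A 2 1 = 0 ∧ A 2 2 = 1) ∧
    A 0 0 ≠ 0 ∧ A 0 0 ≠ 1 ∧ A 1 1 = A 0 0 ∧ A 0 1 = 0 := by
  constructor
  · rintro ⟨t, c, e, ht0, ht1, rfl⟩; norm_num [Matrix.vecHead, Matrix.vecTail, Matrix.cons_val_two, ht0, ht1]
  · rintro ⟨⟨h10, h20, h21, h22⟩, ht0, ht1, h11, h01⟩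
    refine ⟨A 0 0, A 0 2, A 1 2, ht0, ht1, ?_⟩
    rw [Matrix.eta_fin_three A, h10, h20, h21, h22, h11, h01]
    try simp

lemma mem_C11_iff (A : M3 ℂ) : A ∈ C11 ↔
    (A 1 0 = 0 ∧ A 2 0 = 0 ∧ A 2 1 = 0 ∧ A 2 2 = 1) ∧
    A 0 0 ≠ 0 ∧ A 0 0 ≠ 1 ∧ A 1 1 = A 0 0 ∧ A 0 1 ≠ 0 := by
  constructor
  · rintro ⟨t, b, c, e, ht0, ht1, hb, rfl⟩; norm_num [Matrix.vecHead, Matrix.vecTail, Matrix.cons_val_two, ht0, ht1, hb]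
  · rintro ⟨⟨h10, h20, h21, h22⟩, ht0, ht1, h11, h01⟩
    refine ⟨A 0 0, A 0 1, A 0 2, A 1 2, ht0, ht1, h01, ?_⟩
    rw [Matrix.eta_fin_three A, h10, h20, h21, h22, h11]
    try simp

lemma mem_C12_iff (A : M3 ℂ) : A ∈ C12 ↔
    (A 1 0 = 0 ∧ A 2 0 = 0 ∧ A 2 1 = 0 ∧ A 2 2 = 1) ∧
    A 0 0 ≠ 0 ∧ A 0 0 ≠ 1 ∧ A 1 1 ≠ 0 ∧ A 1 1 ≠ 1 ∧ ¬ A 1 1 = A 0 0 := by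
  constructor
  · rintro ⟨t, s, b, c, e, ht0, ht1, hs0, hs1, hts, rfl⟩
    norm_num [Matrix.vecHead, Matrix.vecTail, Matrix.cons_val_two, ht0, ht1, hs0, hs1]
    exact fun h => hts h.symm
  · rintro ⟨⟨h10, h20, h21, h22⟩, ht0, ht1, hs0, hs1, hts⟩
    refine ⟨A 0 0, A 1 1, A 0 1, A 0 2, A 1 2, ht0, ht1, hs0, hs1,
      fun h => hts h.symm, ?_⟩
    rw [Matrix.eta_fin_three A, h10, h20, h21, h22]
    try simp

end Aux
lemma conj_key (P Q A : M3 ℂ) (hP : inU3 P) (hQ : inU3 Q) (hPQ : P * Q = 1)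
    (h10 : A 1 0 = 0) (h20 : A 2 0 = 0) (h21 : A 2 1 = 0) (h22 : A 2 2 = 1) :
    (P * A * Q) 1 0 = 0 ∧ (P * A * Q) 2 0 = 0 ∧ (P * A * Q) 2 1 = 0 ∧
    (P * A * Q) 2 2 = 1 ∧
    (P * A * Q) 0 0 = A 0 0 ∧ (P * A * Q) 1 1 = A 1 1 ∧
    (P * A * Q) 0 1 = P 0 0 * (Q 0 1 * (A 0 0 - A 1 1) + Q 1 1 * A 0 1) ∧
    (P * A * Q) 1 2 = P 1 1 * (Q 1 2 * (A 1 1 - 1) + A 1 2) ∧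
    (A 0 0 = 1 → (P * A * Q) 0 2 * (A 1 1 - 1) - (P * A * Q) 0 1 * (P * A * Q) 1 2
        = P 0 0 * (A 0 2 * (A 1 1 - 1) - A 0 1 * A 1 2)) ∧
    (A 0 0 = 1 → A 1 1 = 1 → A 0 1 = 0 → A 1 2 = 0 →
        (P * A * Q) 0 2 = P 0 0 * A 0 2) := by
  obtain ⟨hP00, hP11, hP22, hP10, hP20, hP21⟩ := hP
  obtain ⟨hQ00, hQ11', hQ22, hQ10, hQ20, hQ21⟩ := hQ
  have e1 : P 0 0 * Q 0 0 = 1 := by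
    have := congrFun (congrFun hPQ 0) 0
    simpa [Matrix.mul_apply, Fin.sum_univ_three, hQ10, hQ20, Matrix.one_apply] using this
  have e2 : P 0 0 * Q 0 1 + P 0 1 * Q 1 1 = 0 := by
    have := congrFun (congrFun hPQ 0) 1
    simpa [Matrix.mul_apply, Fin.sum_univ_three, hQ21, Matrix.one_apply] using this
  have e3 : P 0 0 * Q 0 2 + P 0 1 * Q 1 2 + P 0 2 = 0 := by
    have := congrFun (congrFun hPQ 0) 2
    simpa [Matrix.mul_apply, Fin.sum_univ_three, hQ22, Matrix.one_apply] using this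
  have e4 : P 1 1 * Q 1 1 = 1 := by
    have := congrFun (congrFun hPQ 1) 1
    simpa [Matrix.mul_apply, Fin.sum_univ_three, hP10, hQ21, Matrix.one_apply] using this
  have e5 : P 1 1 * Q 1 2 + P 1 2 = 0 := by
    have := congrFun (congrFun hPQ 1) 2
    simpa [Matrix.mul_apply, Fin.sum_univ_three, hP10, hQ22, Matrix.one_apply] using this
  refine ⟨?_, ?_, ?_, ?_, ?_, ?_, ?_, ?_, ?_, ?_⟩
  · simp [Matrix.mul_apply, Fin.sum_univ_three, hP10, h10, h20, hQ10, hQ20]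
  · simp [Matrix.mul_apply, Fin.sum_univ_three, hP20, hP21, h20, h21, hQ10, hQ20]
  · simp [Matrix.mul_apply, Fin.sum_univ_three, hP20, hP21, hP22, h20, h21, hQ21, hQ10]
  · simp [Matrix.mul_apply, Fin.sum_univ_three, hP20, hP21, hP22, h20, h21, h22, hQ22, hQ10, hQ20, hQ21]
  · simp only [Matrix.mul_apply, Fin.sum_univ_three, h10, h20, hQ10, hQ20]
    ring_nf
    linear_combination A 0 0 * e1
  · simp only [Matrix.mul_apply, Fin.sum_univ_three, hP10, h10, h20, h21, hQ10, hQ21]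
    ring_nf
    linear_combination A 1 1 * e4
  · simp only [Matrix.mul_apply, Fin.sum_univ_three, h10, h20, h21, h22, hQ21]
    linear_combination A 1 1 * e2
  · simp only [Matrix.mul_apply, Fin.sum_univ_three, hP10, h10, h20, h21, h22, hQ22]
    linear_combination e5
  · intro h00
    simp only [Matrix.mul_apply, Fin.sum_univ_three, hP10, h00, h10, h20, h21, h22,
      hQ10, hQ21, hQ22]
    linear_combination (A 1 1 - 1) * e3
      - (P 0 1 * (A 1 1 - 1) + P 0 0 * A 0 1) * (Q 1 2 * (A 1 1 - 1) + A 1 2) * e4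
      - Q 1 1 * (P 0 1 * (A 1 1 - 1) + P 0 0 * A 0 1) * e5
      - (P 1 1 * A 1 1 * Q 1 2 + P 1 1 * A 1 2 + P 1 2) * e2
  · intro h00 h11 hb he
    simp only [Matrix.mul_apply, Fin.sum_univ_three, hP10, h00, h11, hb, he, h10, h20, h21, h22,
      hQ10, hQ21, hQ22]
    linear_combination e3
set_option maxHeartbeats 1000000 in
theorem stmt_8 :
    ({A : M3 ℂ | inU3 A} =
        C1 ∪ C2 ∪ C3 ∪ C4 ∪ C5 ∪ C6 ∪ C7 ∪ C8 ∪ C9 ∪ C10 ∪ C11 ∪ C12) ∧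
    List.Pairwise Disjoint [C1, C2, C3, C4, C5, C6, C7, C8, C9, C10, C11, C12] ∧
    (∀ S ∈ [C1, C2, C3, C4, C5, C6, C7, C8, C9, C10, C11, C12],
      ∀ A ∈ S, ∀ P Q : M3 ℂ, inU3 P → inU3 Q → P * Q = 1 → P * A * Q ∈ S) := by
  refine ⟨?_, ?_, ?_⟩
  · ext A
    simp only [Set.mem_setOf_eq, Set.mem_union, mem_C1_iff, mem_C2_iff, mem_C3_iff,
      mem_C4_iff, mem_C5_iff, mem_C6_iff, mem_C7_iff, mem_C8_iff, mem_C9_iff,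
      mem_C10_iff, mem_C11_iff, mem_C12_iff, inU3]
    constructor
    · rintro ⟨h00, h11, h22, h10, h20, h21⟩
      have L : A 1 0 = 0 ∧ A 2 0 = 0 ∧ A 2 1 = 0 ∧ A 2 2 = 1 := ⟨h10, h20, h21, h22⟩
      by_cases ha : A 0 0 = 1
      · by_cases hd : A 1 1 = 1
        · by_cases hb : A 0 1 = 0
          · by_cases he : A 1 2 = 0
            · by_cases hc : A 0 2 = 0
              · exact Or.inl (Or.inl (Or.inl (Or.inl (Or.inl (Or.inl (Or.inl (Or.inl (Or.inl (Or.inl (Or.inl (⟨L, ha, hd, hb, he, hc⟩)))))))))))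
              · exact Or.inl (Or.inl (Or.inl (Or.inl (Or.inl (Or.inl (Or.inl (Or.inr ⟨L, ha, hd, hb, he, hc⟩)))))))
            · exact Or.inl (Or.inl (Or.inl (Or.inl (Or.inl (Or.inl (Or.inl (Or.inl (Or.inr ⟨L, ha, hd, hb, he⟩))))))))
          · by_cases he : A 1 2 = 0
            · exact Or.inl (Or.inl (Or.inl (Or.inl (Or.inl (Or.inl (Or.inl (Or.inl (Or.inl (Or.inr ⟨L, ha, hd, hb, he⟩)))))))))
            · exact Or.inl (Or.inl (Or.inl (Or.inl (Or.inl (Or.inl (Or.inl (Or.inl (Or.inl (Or.inl (Or.inr ⟨L, ha, hd, hb, he⟩))))))))))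
        · by_cases hkey : A 0 2 * (A 1 1 - 1) = A 0 1 * A 1 2
          · exact Or.inl (Or.inl (Or.inl (Or.inl (Or.inl (Or.inl (Or.inr ⟨L, ha, h11, hd, hkey⟩))))))
          · exact Or.inl (Or.inl (Or.inl (Or.inl (Or.inl (Or.inr ⟨L, ha, h11, hd, hkey⟩)))))
      · by_cases hd : A 1 1 = 1
        · by_cases he : A 1 2 = 0
          · exact Or.inl (Or.inl (Or.inl (Or.inl (Or.inr ⟨L, h00, ha, hd, he⟩))))
          · exact Or.inl (Or.inl (Or.inl (Or.inr ⟨L, h00, ha, hd, he⟩)))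
        · by_cases had : A 1 1 = A 0 0
          · by_cases hb : A 0 1 = 0
            · exact Or.inl (Or.inl (Or.inr ⟨L, h00, ha, had, hb⟩))
            · exact Or.inl (Or.inr ⟨L, h00, ha, had, hb⟩)
          · exact Or.inr ⟨L, h00, ha, h11, hd, had⟩
    · rintro (((((((((((⟨⟨h10, h20, h21, h22⟩, h⟩ | ⟨⟨h10, h20, h21, h22⟩, h⟩) |
        ⟨⟨h10, h20, h21, h22⟩, h⟩) | ⟨⟨h10, h20, h21, h22⟩, h⟩) |
        ⟨⟨h10, h20, h21, h22⟩, h⟩) | ⟨⟨h10, h20, h21, h22⟩, h⟩) |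
        ⟨⟨h10, h20, h21, h22⟩, h⟩) | ⟨⟨h10, h20, h21, h22⟩, h⟩) |
        ⟨⟨h10, h20, h21, h22⟩, h⟩) | ⟨⟨h10, h20, h21, h22⟩, h⟩) |
        ⟨⟨h10, h20, h21, h22⟩, h⟩) | ⟨⟨h10, h20, h21, h22⟩, h⟩) <;>
      exact ⟨by simp_all, by simp_all, h22, h10, h20, h21⟩
  · simp only [List.pairwise_cons, List.mem_cons, List.not_mem_nil, or_false,
      forall_eq_or_imp, forall_eq]
    simp only [Set.disjoint_left, mem_C1_iff, mem_C2_iff, mem_C3_iff, mem_C4_iff,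
      mem_C5_iff, mem_C6_iff, mem_C7_iff, mem_C8_iff, mem_C9_iff, mem_C10_iff,
      mem_C11_iff, mem_C12_iff]
    and_intros <;> first
      | exact List.Pairwise.nil
      | (intro A hA hB; simp_all)
  · intro S hS
    simp only [List.mem_cons, List.not_mem_nil, or_false] at hS
    rcases hS with rfl | rfl | rfl | rfl | rfl | rfl | rfl | rfl | rfl | rfl | rfl | rfl
    · -- C1
      intro A hA P Q hP hQ hPQ
      have h1 : A = 1 := by rw [show A = _ from hA, Matrix.one_fin_three]
      show P * A * Q = _
      rw [h1, mul_one, hPQ, Matrix.one_fin_three]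
    · -- C2
      intro A hA P Q hP hQ hPQ
      rw [mem_C2_iff] at hA ⊢
      obtain ⟨⟨h10, h20, h21, h22⟩, h00, h11, hb, he⟩ := hA
      obtain ⟨b10, b20, b21, b22, b00, b11, b01, b12, bkey, blast⟩ :=
        conj_key P Q A hP hQ hPQ h10 h20 h21 h22
      refine ⟨⟨b10, b20, b21, b22⟩, by rw [b00, h00], by rw [b11, h11], ?_, ?_⟩
      · rw [b01, h00, h11]
        simp only [sub_self, mul_zero, zero_add]
        exact mul_ne_zero hP.1 (mul_ne_zero hQ.2.1 hb)
      · rw [b12, h11]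
        simp only [sub_self, mul_zero, zero_add]
        exact mul_ne_zero hP.2.1 he
    · -- C3
      intro A hA P Q hP hQ hPQ
      rw [mem_C3_iff] at hA ⊢
      obtain ⟨⟨h10, h20, h21, h22⟩, h00, h11, hb, he⟩ := hA
      obtain ⟨b10, b20, b21, b22, b00, b11, b01, b12, bkey, blast⟩ :=
        conj_key P Q A hP hQ hPQ h10 h20 h21 h22
      refine ⟨⟨b10, b20, b21, b22⟩, by rw [b00, h00], by rw [b11, h11], ?_, ?_⟩
      · rw [b01, h00, h11]
        simp only [sub_self, mul_zero, zero_add]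
        exact mul_ne_zero hP.1 (mul_ne_zero hQ.2.1 hb)
      · rw [b12, h11, he]
        simp
    · -- C4
      intro A hA P Q hP hQ hPQ
      rw [mem_C4_iff] at hA ⊢
      obtain ⟨⟨h10, h20, h21, h22⟩, h00, h11, hb, he⟩ := hA
      obtain ⟨b10, b20, b21, b22, b00, b11, b01, b12, bkey, blast⟩ :=
        conj_key P Q A hP hQ hPQ h10 h20 h21 h22
      refine ⟨⟨b10, b20, b21, b22⟩, by rw [b00, h00], by rw [b11, h11], ?_, ?_⟩
      · rw [b01, h00, h11, hb]
        simp
      · rw [b12, h11]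
        simp only [sub_self, mul_zero, zero_add]
        exact mul_ne_zero hP.2.1 he
    · -- C5
      intro A hA P Q hP hQ hPQ
      rw [mem_C5_iff] at hA ⊢
      obtain ⟨⟨h10, h20, h21, h22⟩, h00, h11, hb, he, hc⟩ := hA
      obtain ⟨b10, b20, b21, b22, b00, b11, b01, b12, bkey, blast⟩ :=
        conj_key P Q A hP hQ hPQ h10 h20 h21 h22
      refine ⟨⟨b10, b20, b21, b22⟩, by rw [b00, h00], by rw [b11, h11],
        ?_, ?_, ?_⟩
      · rw [b01, h00, h11, hb]; simp
      · rw [b12, h11, he]; simp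
      · rw [blast h00 h11 hb he]
        exact mul_ne_zero hP.1 hc
    · -- C6
      intro A hA P Q hP hQ hPQ
      rw [mem_C6_iff] at hA ⊢
      obtain ⟨⟨h10, h20, h21, h22⟩, h00, ht0, ht1, hkey⟩ := hA
      obtain ⟨b10, b20, b21, b22, b00, b11, b01, b12, bkey, blast⟩ :=
        conj_key P Q A hP hQ hPQ h10 h20 h21 h22
      refine ⟨⟨b10, b20, b21, b22⟩, by rw [b00, h00], by rw [b11]; exact ht0,
        by rw [b11]; exact ht1, ?_⟩
      have h := bkey h00
      rw [hkey, sub_self, mul_zero, sub_eq_zero] at h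
      rw [b11]
      exact h
    · -- C7
      intro A hA P Q hP hQ hPQ
      rw [mem_C7_iff] at hA ⊢
      obtain ⟨⟨h10, h20, h21, h22⟩, h00, ht0, ht1, hkey⟩ := hA
      obtain ⟨b10, b20, b21, b22, b00, b11, b01, b12, bkey, blast⟩ :=
        conj_key P Q A hP hQ hPQ h10 h20 h21 h22
      refine ⟨⟨b10, b20, b21, b22⟩, by rw [b00, h00], by rw [b11]; exact ht0,
        by rw [b11]; exact ht1, ?_⟩
      rw [b11]
      intro hcontra
      apply mul_ne_zero hP.1 (sub_ne_zero.mpr hkey)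
      rw [← bkey h00, hcontra, sub_self]
    · -- C8
      intro A hA P Q hP hQ hPQ
      rw [mem_C8_iff] at hA ⊢
      obtain ⟨⟨h10, h20, h21, h22⟩, ht0, ht1, h11, h12⟩ := hA
      obtain ⟨b10, b20, b21, b22, b00, b11, b01, b12, bkey, blast⟩ :=
        conj_key P Q A hP hQ hPQ h10 h20 h21 h22
      refine ⟨⟨b10, b20, b21, b22⟩, by rw [b00]; exact ht0, by rw [b00]; exact ht1,
        by rw [b11, h11], ?_⟩
      rw [b12, h11, h12]
      simp
    · -- C9
      intro A hA P Q hP hQ hPQ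
      rw [mem_C9_iff] at hA ⊢
      obtain ⟨⟨h10, h20, h21, h22⟩, ht0, ht1, h11, h12⟩ := hA
      obtain ⟨b10, b20, b21, b22, b00, b11, b01, b12, bkey, blast⟩ :=
        conj_key P Q A hP hQ hPQ h10 h20 h21 h22
      refine ⟨⟨b10, b20, b21, b22⟩, by rw [b00]; exact ht0, by rw [b00]; exact ht1,
        by rw [b11, h11], ?_⟩
      rw [b12, h11]
      simp only [sub_self, mul_zero, zero_add]
      exact mul_ne_zero hP.2.1 h12
    · -- C10
      intro A hA P Q hP hQ hPQ
      rw [mem_C10_iff] at hA ⊢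
      obtain ⟨⟨h10, h20, h21, h22⟩, ht0, ht1, h11, h01⟩ := hA
      obtain ⟨b10, b20, b21, b22, b00, b11, b01, b12, bkey, blast⟩ :=
        conj_key P Q A hP hQ hPQ h10 h20 h21 h22
      refine ⟨⟨b10, b20, b21, b22⟩, by rw [b00]; exact ht0, by rw [b00]; exact ht1,
        by rw [b11, b00]; exact h11, ?_⟩
      rw [b01, h11, h01]
      simp
    · -- C11
      intro A hA P Q hP hQ hPQ
      rw [mem_C11_iff] at hA ⊢
      obtain ⟨⟨h10, h20, h21, h22⟩, ht0, ht1, h11, h01⟩ := hA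
      obtain ⟨b10, b20, b21, b22, b00, b11, b01, b12, bkey, blast⟩ :=
        conj_key P Q A hP hQ hPQ h10 h20 h21 h22
      refine ⟨⟨b10, b20, b21, b22⟩, by rw [b00]; exact ht0, by rw [b00]; exact ht1,
        by rw [b11, b00]; exact h11, ?_⟩
      rw [b01, h11]
      simp only [sub_self, mul_zero, zero_add]
      exact mul_ne_zero hP.1 (mul_ne_zero hQ.2.1 h01)
    · -- C12
      intro A hA P Q hP hQ hPQ
      rw [mem_C12_iff] at hA ⊢
      obtain ⟨⟨h10, h20, h21, h22⟩, ht0, ht1, hs0, hs1, hts⟩ := hA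
      obtain ⟨b10, b20, b21, b22, b00, b11, b01, b12, bkey, blast⟩ :=
        conj_key P Q A hP hQ hPQ h10 h20 h21 h22
      exact ⟨⟨b10, b20, b21, b22⟩, by rw [b00]; exact ht0, by rw [b00]; exact ht1,
        by rw [b11]; exact hs0, by rw [b11]; exact hs1, by rw [b11, b00]; exact hts⟩
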